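/- arXiv:2201.12857 — 3 statements merged into one kernel-verified Lean document; each statement's English description precedes it below -/
import Mathlib

section
/- If T is exponentially distributed with rate λ and T₀ ≥ 0 is a constant, then Z := -log(T + T₀) has the same distribution as a Gumbel random variable with location log λ and unit scale, truncated to the interval (-∞, -log T₀]. -/
open MeasureTheory Set Filter

lemma lemA {lam : ℝ} (hlam : 0 < lam) (c : ℝ) :
    ∫⁻ t in Set.Ioi c, ENNReal.ofReal (lam * Real.exp (-(lam * t))) =
      ENNReal.ofReal (Real.exp (-(lam * c))) := by
  have hderiv : ∀ x ∈ Set.Ici c,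
      HasDerivAt (fun t => -Real.exp (-(lam * t))) (lam * Real.exp (-(lam * x))) x := by
    intro x _
    have h1 : HasDerivAt (fun t : ℝ => -(lam * t)) (-lam) x := by
      simpa [Pi.neg_def] using ((hasDerivAt_id x).const_mul lam).neg
    have h2 := (Real.hasDerivAt_exp (-(lam * x))).comp x h1
    have h3 : HasDerivAt (fun t => -Real.exp (-(lam * t))) (-(Real.exp (-(lam * x)) * -lam)) x := h2.neg
    convert h3 using 1
    ring
  have hpos : ∀ x ∈ Set.Ioi c, 0 ≤ lam * Real.exp (-(lam * x)) :=
    fun x _ => le_of_lt (mul_pos hlam (Real.exp_pos _))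
  have htend : Tendsto (fun t => -Real.exp (-(lam * t))) atTop (nhds 0) := by
    rw [← neg_zero]
    exact (Real.tendsto_exp_atBot.comp
      (tendsto_neg_atTop_atBot.comp (tendsto_id.const_mul_atTop hlam))).neg
  have hint := integrableOn_Ioi_deriv_of_nonneg' hderiv hpos htend
  have heq := integral_Ioi_of_hasDerivAt_of_nonneg' hderiv hpos htend
  rw [← ofReal_integral_eq_lintegral_ofReal hint
    (Filter.Eventually.of_forall fun x => le_of_lt (mul_pos hlam (Real.exp_pos _)))]
  rw [heq]
  norm_num

lemma lemB {lam : ℝ} (hlam : 0 < lam) (b : ℝ) :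
    ∫⁻ z in Set.Iic b,
        ENNReal.ofReal (lam * Real.exp (-z) * Real.exp (-(lam * Real.exp (-z)))) =
      ENNReal.ofReal (Real.exp (-(lam * Real.exp (-b)))) := by
  have hneg : (Neg.neg : ℝ → ℝ) ⁻¹' Set.Iic b = Set.Ici (-b) := by
    ext x; simp [neg_le]
  have hsub := (Measure.measurePreserving_neg (volume : Measure ℝ)).setLIntegral_comp_preimage_emb
    (Homeomorph.neg ℝ).measurableEmbedding
    (fun z => ENNReal.ofReal (lam * Real.exp (-z) * Real.exp (-(lam * Real.exp (-z)))))
    (Set.Iic b)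
  rw [← hsub, hneg]
  have hIoi : ∫⁻ u in Set.Ici (-b),
      ENNReal.ofReal (lam * Real.exp (-(-u)) * Real.exp (-(lam * Real.exp (-(-u))))) =
      ∫⁻ u in Set.Ioi (-b),
      ENNReal.ofReal (lam * Real.exp u * Real.exp (-(lam * Real.exp u))) := by
    rw [setLIntegral_congr (Ioi_ae_eq_Ici (μ := (volume : Measure ℝ)) (a := -b)).symm]
    simp [neg_neg]
  rw [hIoi]
  have hderiv : ∀ x ∈ Set.Ici (-b),
      HasDerivAt (fun u => -Real.exp (-(lam * Real.exp u)))
        (lam * Real.exp x * Real.exp (-(lam * Real.exp x))) x := by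
    intro x _
    have h1 : HasDerivAt (fun u : ℝ => -(lam * Real.exp u)) (-(lam * Real.exp x)) x := by
      simpa [Pi.neg_def] using ((Real.hasDerivAt_exp x).const_mul lam).neg
    have h2' := (Real.hasDerivAt_exp (-(lam * Real.exp x))).comp x h1
    have h2 : HasDerivAt (fun u => -Real.exp (-(lam * Real.exp u)))
        (-(Real.exp (-(lam * Real.exp x)) * -(lam * Real.exp x))) x := h2'.neg
    convert h2 using 1
    ring
  have hpos : ∀ x ∈ Set.Ioi (-b), 0 ≤ lam * Real.exp x * Real.exp (-(lam * Real.exp x)) :=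
    fun x _ => by positivity
  have htend : Tendsto (fun u => -Real.exp (-(lam * Real.exp u))) atTop (nhds 0) := by
    rw [← neg_zero]
    refine Tendsto.neg (Real.tendsto_exp_atBot.comp ?_)
    exact tendsto_neg_atTop_atBot.comp ((Real.tendsto_exp_atTop).const_mul_atTop hlam)
  have hint := integrableOn_Ioi_deriv_of_nonneg' hderiv hpos htend
  have heq := integral_Ioi_of_hasDerivAt_of_nonneg' hderiv hpos htend
  rw [← ofReal_integral_eq_lintegral_ofReal hint
    (Filter.Eventually.of_forall fun x => by positivity)]
  rw [heq]
  norm_num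

/-- If `T ~ Exp(λ)` (density `λ e^{-λt}` on `[0, ∞)`) and `T₀ ≥ 0`, then
`Z := -log (T + T₀)` is distributed as a Gumbel with location `log λ` and unit scale,
truncated to `(-∞, -log T₀]` (i.e. to `{z | T₀ ≤ e^{-z}}`), whose density is
`λ e^{-z} exp(-λ e^{-z}) / exp(-λ T₀)`. -/
theorem exp_shift_neg_log_eq_truncGumbel (lam T0 : ℝ) (hlam : 0 < lam) (hT0 : 0 ≤ T0)
    (μT : Measure ℝ)
    (hμT : μT = volume.withDensity (fun t => ENNReal.ofReal
      (Set.indicator (Set.Ici (0:ℝ)) (fun t => lam * Real.exp (-(lam * t))) t))) :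
    μT.map (fun t => -Real.log (t + T0)) =
      volume.withDensity (fun z => ENNReal.ofReal
        (Set.indicator {z : ℝ | T0 ≤ Real.exp (-z)}
          (fun z => lam * Real.exp (-z) * Real.exp (-(lam * Real.exp (-z)))
              * Real.exp (lam * T0)) z)) := by
  have hf : Measurable (fun t : ℝ => -Real.log (t + T0)) :=
    (Real.measurable_log.comp (measurable_id.add_const T0)).neg
  have hdens : (fun t => ENNReal.ofReal
      (Set.indicator (Set.Ici (0:ℝ)) (fun t => lam * Real.exp (-(lam * t))) t)) =
      fun t => Set.indicator (Set.Ici (0:ℝ))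
        (fun t => ENNReal.ofReal (lam * Real.exp (-(lam * t)))) t := by
    funext t
    by_cases ht : t ∈ Set.Ici (0:ℝ) <;> simp [ht]
  have hdens2 : (fun z => ENNReal.ofReal
      (Set.indicator {z : ℝ | T0 ≤ Real.exp (-z)}
        (fun z => lam * Real.exp (-z) * Real.exp (-(lam * Real.exp (-z)))
          * Real.exp (lam * T0)) z)) =
      fun z => Set.indicator {z : ℝ | T0 ≤ Real.exp (-z)}
        (fun z => ENNReal.ofReal (lam * Real.exp (-z) * Real.exp (-(lam * Real.exp (-z)))
          * Real.exp (lam * T0))) z := by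
    funext z
    by_cases hz : z ∈ {z : ℝ | T0 ≤ Real.exp (-z)} <;> simp [hz]
  have hA : MeasurableSet {z : ℝ | T0 ≤ Real.exp (-z)} := by
    have h : {z : ℝ | T0 ≤ Real.exp (-z)} = (fun z => Real.exp (-z)) ⁻¹' Set.Ici T0 := rfl
    rw [h]
    exact (Real.continuous_exp.comp continuous_neg).measurable measurableSet_Ici
  haveI : IsFiniteMeasure μT := by
    constructor
    rw [hμT, hdens, withDensity_apply _ MeasurableSet.univ, Measure.restrict_univ,
      lintegral_indicator measurableSet_Ici,
      setLIntegral_congr (Ioi_ae_eq_Ici (a := (0:ℝ))).symm, lemA hlam 0]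
    exact ENNReal.ofReal_lt_top
  haveI := Measure.isFiniteMeasure_map μT (fun t => -Real.log (t + T0))
  refine Measure.ext_of_Iic _ _ (fun a => ?_)
  rw [Measure.map_apply hf measurableSet_Iic, hμT, hdens,
    withDensity_apply _ (hf measurableSet_Iic),
    setLIntegral_indicator measurableSet_Ici, hdens2,
    withDensity_apply _ measurableSet_Iic,
    setLIntegral_indicator hA]
  set c := max 0 (Real.exp (-a) - T0) with hc
  have hsetL : ((Set.Ici (0:ℝ) ∩ ((fun t : ℝ => -Real.log (t + T0)) ⁻¹' Set.Iic a)) : Set ℝ)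
      =ᵐ[volume] Set.Ioi c := by
    have hsub1 : (Set.Ici (0:ℝ) ∩ ((fun t : ℝ => -Real.log (t + T0)) ⁻¹' Set.Iic a)) \ Set.Ioi c
        ⊆ ({0, c} : Set ℝ) := by
      rintro t ⟨⟨ht0, hta⟩, htc⟩
      simp only [Set.mem_preimage, Set.mem_Iic] at hta
      simp only [Set.mem_Ioi, not_lt] at htc
      have ht0' : (0:ℝ) ≤ t := ht0
      rcases ht0'.eq_or_lt with h | h
      · exact Or.inl h.symm
      · have hpos : 0 < t + T0 := by linarith
        have h1 : Real.exp (-a) ≤ t + T0 :=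
          (Real.le_log_iff_exp_le hpos).1 (by linarith)
        have h2 : c ≤ t := max_le h.le (by linarith)
        exact Or.inr (le_antisymm htc h2)
    have hsub2 : Set.Ioi c \ (Set.Ici (0:ℝ) ∩ ((fun t : ℝ => -Real.log (t + T0)) ⁻¹' Set.Iic a))
        ⊆ (∅ : Set ℝ) := by
      rintro t ⟨htc, hmem⟩
      have ht0 : 0 < t := lt_of_le_of_lt (le_max_left _ _) htc
      refine (hmem ⟨ht0.le, ?_⟩).elim
      show -Real.log (t + T0) ≤ a
      have hpos : 0 < t + T0 := by linarith
      have h1 : Real.exp (-a) ≤ t + T0 := by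
        have := lt_of_le_of_lt (le_max_right 0 (Real.exp (-a) - T0)) htc
        linarith
      have h2 := (Real.le_log_iff_exp_le hpos).2 h1
      linarith
    refine MeasureTheory.ae_eq_set.2
      ⟨measure_mono_null hsub1 ?_, measure_mono_null hsub2 (by simp)⟩
    have h01 : ({0, c} : Set ℝ) = {0} ∪ {c} := rfl
    rw [h01]
    exact measure_union_null Real.volume_singleton Real.volume_singleton
  rw [setLIntegral_congr hsetL, lemA hlam c]
  rcases eq_or_lt_of_le hT0 with h0 | h0
  · subst h0
    have huniv : {z : ℝ | (0:ℝ) ≤ Real.exp (-z)} = Set.univ :=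
      Set.eq_univ_of_forall fun z => (Real.exp_pos _).le
    rw [huniv, Set.univ_inter]
    simp only [mul_zero, Real.exp_zero, mul_one]
    rw [lemB hlam a]
    congr 3
    rw [hc]
    simp [max_eq_right (Real.exp_pos (-a)).le]
  · have hAset : {z : ℝ | T0 ≤ Real.exp (-z)} = Set.Iic (-Real.log T0) := by
      ext z
      simp only [Set.mem_setOf_eq, Set.mem_Iic]
      rw [← Real.log_le_iff_le_exp h0, le_neg]
    rw [hAset, Set.Iic_inter_Iic]
    have hsplit : ∀ z : ℝ, ENNReal.ofReal (lam * Real.exp (-z)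
        * Real.exp (-(lam * Real.exp (-z))) * Real.exp (lam * T0)) =
        ENNReal.ofReal (lam * Real.exp (-z) * Real.exp (-(lam * Real.exp (-z))))
          * ENNReal.ofReal (Real.exp (lam * T0)) :=
      fun z => ENNReal.ofReal_mul (by positivity)
    simp_rw [hsplit]
    rw [lintegral_mul_const' _ _ ENNReal.ofReal_ne_top, lemB hlam (-Real.log T0 ⊓ a),
      ← ENNReal.ofReal_mul (Real.exp_pos _).le, ← Real.exp_add]
    congr 2
    have hexp : Real.exp (-(-Real.log T0 ⊓ a)) = max T0 (Real.exp (-a)) := by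
      rw [neg_inf, neg_neg]
      rw [Real.exp_strictMono.monotone.map_max, Real.exp_log h0]
    rw [hexp, hc]
    have hmax : max 0 (Real.exp (-a) - T0) = max T0 (Real.exp (-a)) - T0 := by
      rw [eq_comm, ← max_sub_sub_right, sub_self]
    rw [hmax]
    ring
end

section
/- Under the dyadic tree importance sampling setup, the estimator I_D(h) for h(x) = f(x)·1[r(x) ≤ a] satisfies Var[I_D(h)] ≤ a ‖f‖²_Q / N, where ‖f‖²_Q = E_Q[f²] and N = 2^D - 1. -/
open MeasureTheory ProbabilityTheory
open scoped ENNReal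

/-- Variance bound for the dyadic-tree importance estimator of the truncated function
`h(x) = f(x)·1[r(x) ≤ a]`: under the dyadic setup with independent samples,
`Var[I_D(h)] ≤ a ‖f‖²_Q / N` with `N = 2^D - 1`. -/
theorem dyadic_importance_variance_bound {Ω Ω' : Type*} [MeasurableSpace Ω] [MeasurableSpace Ω']
    (P Q : Measure Ω) [IsProbabilityMeasure P] [IsProbabilityMeasure Q] (hQP : Q ≪ P)
    (μ : Measure Ω') [IsProbabilityMeasure μ]
    (D : ℕ) (hD : 0 < D)
    (B : (d : ℕ) → Fin (2 ^ d) → Set Ω)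
    (hBmeas : ∀ d j, MeasurableSet (B d j))
    (hdisj : ∀ d, d < D → Pairwise (Function.onFun Disjoint (B d)))
    (hcover : ∀ d, d < D → (⋃ j, B d j) = Set.univ)
    (hmass : ∀ d, d < D → ∀ j, P (B d j) = (2 : ℝ≥0∞)⁻¹ ^ d)
    (X : (d : ℕ) → Fin (2 ^ d) → Ω' → Ω)
    (hXmeas : ∀ d j, Measurable (X d j))
    (hXlaw : ∀ d, d < D → ∀ j, μ.map (X d j) = (P (B d j))⁻¹ • P.restrict (B d j))
    (hindep : iIndepFun (m := fun _ : (d : Fin D) × Fin (2 ^ (d : ℕ)) => ‹MeasurableSpace Ω›)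
      (fun i => X (i.1 : ℕ) i.2) μ)
    (f : Ω → ℝ) (hfmeas : Measurable f) (hf2 : MemLp f 2 Q)
    (a : ℝ) (ha : 0 < a)
    (h : Ω → ℝ) (hh : h = fun x => if (Q.rnDeriv P x).toReal ≤ a then f x else 0) :
    variance (fun ω' => (1 / ((2:ℝ) ^ D - 1)) * ∑ d ∈ Finset.range D, ∑ j : Fin (2 ^ d),
        (Q.rnDeriv P (X d j ω')).toReal * h (X d j ω')) μ
      ≤ a * (∫ x, (f x) ^ 2 ∂Q) / ((2:ℝ) ^ D - 1) := by
  set N : ℝ := (2:ℝ) ^ D - 1 with hN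
  have hNpos : 0 < N := by
    have : (2:ℝ) ^ 1 ≤ (2:ℝ) ^ D := by
      apply pow_le_pow_right₀ (by norm_num) hD
    simp only [hN]; nlinarith
  set g : Ω → ℝ := fun x => (Q.rnDeriv P x).toReal * h x with hg
  have hrmeas : Measurable fun x => (Q.rnDeriv P x).toReal :=
    (Measure.measurable_rnDeriv Q P).ennreal_toReal
  have hhmeas : Measurable h := by
    rw [hh]
    exact Measurable.ite (measurableSet_le hrmeas measurable_const) hfmeas measurable_const
  have hgmeas : Measurable g := hrmeas.mul hhmeas
  -- pointwise bound for g²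
  have hg2le : ∀ x, (g x)^2 ≤ a * ((Q.rnDeriv P x).toReal * (f x)^2) := by
    intro x
    have hr0 : 0 ≤ (Q.rnDeriv P x).toReal := ENNReal.toReal_nonneg
    simp only [hg, hh]
    by_cases hx : (Q.rnDeriv P x).toReal ≤ a
    · simp only [if_pos hx]
      nlinarith [sq_nonneg (f x), mul_nonneg hr0 (sq_nonneg (f x))]
    · simp only [if_neg hx, mul_zero]
      nlinarith [mul_nonneg hr0 (sq_nonneg (f x))]
  -- integrability facts
  have hf2Q : Integrable (fun x => (f x)^2) Q := hf2.integrable_sq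
  have hrf2 : Integrable (fun x => (Q.rnDeriv P x).toReal * (f x)^2) P := by
    have := (MeasureTheory.integrable_rnDeriv_smul_iff (f := fun x => (f x)^2) hQP).mpr hf2Q
    simpa [smul_eq_mul] using this
  have hInt_eq : ∫ x, (Q.rnDeriv P x).toReal * (f x)^2 ∂P = ∫ x, (f x)^2 ∂Q := by
    have := MeasureTheory.integral_rnDeriv_smul (f := fun x => (f x)^2) hQP
    simpa [smul_eq_mul] using this
  have hg2int : Integrable (fun x => (g x)^2) P := by
    refine Integrable.mono' (hrf2.const_mul a) (hgmeas.pow_const 2).aestronglyMeasurable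
      (ae_of_all _ fun x => ?_)
    rw [Real.norm_eq_abs, abs_of_nonneg (sq_nonneg _)]
    exact hg2le x
  have hg2bound : ∫ x, (g x)^2 ∂P ≤ a * ∫ x, (f x)^2 ∂Q := by
    calc ∫ x, (g x)^2 ∂P ≤ ∫ x, a * ((Q.rnDeriv P x).toReal * (f x)^2) ∂P :=
          integral_mono hg2int (hrf2.const_mul a) hg2le
      _ = a * ∫ x, (f x)^2 ∂Q := by rw [integral_const_mul, hInt_eq]
  -- the individual samples
  set Y : ((d : Fin D) × Fin (2 ^ (d : ℕ))) → Ω' → ℝ :=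
    fun i ω' => g (X (i.1 : ℕ) i.2 ω') with hYdef
  have hYmeas : ∀ i, Measurable (Y i) := fun i => hgmeas.comp (hXmeas _ _)
  have hlaw : ∀ d, d < D → ∀ j, μ.map (X d j) = ((2:ℝ≥0∞) ^ d) • P.restrict (B d j) := by
    intro d hd j
    rw [hXlaw d hd j, hmass d hd j]
    congr 1
    rw [← ENNReal.inv_pow, inv_inv]
  have hEsq : ∀ d, d < D → ∀ j, ∫ ω', (g (X d j ω'))^2 ∂μ
      = (2:ℝ)^d * ∫ x in B d j, (g x)^2 ∂P := by
    intro d hd j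
    have h1 : ∫ ω', (g (X d j ω'))^2 ∂μ = ∫ x, (g x)^2 ∂(μ.map (X d j)) :=
      (integral_map (hXmeas d j).aemeasurable (hgmeas.pow_const 2).aestronglyMeasurable).symm
    rw [h1, hlaw d hd j, integral_smul_measure, smul_eq_mul]
    norm_num [ENNReal.toReal_pow]
  have hYsq_int : ∀ d, d < D → ∀ j, Integrable (fun ω' => (g (X d j ω'))^2) μ := by
    intro d hd j
    have h1 : Integrable (fun x => (g x)^2) (μ.map (X d j)) := by
      rw [hlaw d hd j]
      exact (hg2int.restrict).smul_measure (by simp)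
    exact (integrable_map_measure (hgmeas.pow_const 2).aestronglyMeasurable
      (hXmeas d j).aemeasurable).mp h1
  have hYmem : ∀ i : (d : Fin D) × Fin (2 ^ (d : ℕ)), MemLp (Y i) 2 μ := by
    intro i
    rw [memLp_two_iff_integrable_sq (hYmeas i).aestronglyMeasurable]
    exact hYsq_int (i.1 : ℕ) i.1.isLt i.2
  -- independence of the Y i
  have hYindep : iIndepFun Y μ :=
    hindep.comp (fun _ => g) (fun _ => hgmeas)
  have hvarsum : variance (∑ i, Y i) μ = ∑ i, variance (Y i) μ :=
    IndepFun.variance_sum (fun i _ => hYmem i)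
      (fun i _ j _ hij => hYindep.indepFun hij)
  -- sum over j of set integrals
  have hsumj : ∀ d, d < D → ∑ j : Fin (2^d), ∫ x in B d j, (g x)^2 ∂P = ∫ x, (g x)^2 ∂P := by
    intro d hd
    have h1 := integral_iUnion (μ := P) (s := B d) (hBmeas d) (hdisj d hd)
      (f := fun x => (g x)^2) (by rw [hcover d hd]; exact hg2int.integrableOn)
    rw [hcover d hd, Measure.restrict_univ, tsum_fintype] at h1
    exact h1.symm
  -- variance of each sample
  have hvar_le : ∀ i : (d : Fin D) × Fin (2 ^ (d : ℕ)),
      variance (Y i) μ ≤ (2:ℝ)^(i.1:ℕ) * ∫ x in B (i.1:ℕ) i.2, (g x)^2 ∂P := by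
    intro i
    calc variance (Y i) μ ≤ ∫ ω', (Y i ω')^2 ∂μ := by
          have := variance_le_expectation_sq (μ := μ) (hYmeas i).aestronglyMeasurable
          simpa using this
      _ = (2:ℝ)^(i.1:ℕ) * ∫ x in B (i.1:ℕ) i.2, (g x)^2 ∂P :=
          hEsq (i.1:ℕ) i.1.isLt i.2
  -- total bound on the sum of variances
  have hsum_bound : ∑ i : (d : Fin D) × Fin (2 ^ (d : ℕ)), variance (Y i) μ
      ≤ N * (a * ∫ x, (f x)^2 ∂Q) := by
    calc ∑ i : (d : Fin D) × Fin (2 ^ (d : ℕ)), variance (Y i) μ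
        ≤ ∑ i : (d : Fin D) × Fin (2 ^ (d : ℕ)),
            (2:ℝ)^(i.1:ℕ) * ∫ x in B (i.1:ℕ) i.2, (g x)^2 ∂P :=
          Finset.sum_le_sum fun i _ => hvar_le i
      _ = ∑ d : Fin D, ∑ j : Fin (2 ^ (d:ℕ)),
            (2:ℝ)^(d:ℕ) * ∫ x in B (d:ℕ) j, (g x)^2 ∂P := by
          rw [← Finset.univ_sigma_univ, Finset.sum_sigma]
      _ = ∑ d : Fin D, (2:ℝ)^(d:ℕ) * ∫ x, (g x)^2 ∂P := by
          refine Finset.sum_congr rfl fun d _ => ?_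
          rw [← Finset.mul_sum, hsumj (d:ℕ) d.isLt]
      _ = ∑ d ∈ Finset.range D, (2:ℝ)^d * ∫ x, (g x)^2 ∂P :=
          Fin.sum_univ_eq_sum_range (fun d => (2:ℝ)^d * ∫ x, (g x)^2 ∂P) D
      _ = N * ∫ x, (g x)^2 ∂P := by
          rw [← Finset.sum_mul]
          congr 1
          rw [geom_sum_eq (by norm_num : (2:ℝ) ≠ 1) D]
          norm_num [hN]
      _ ≤ N * (a * ∫ x, (f x)^2 ∂Q) :=
          mul_le_mul_of_nonneg_left hg2bound hNpos.le
  -- rewrite the estimator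
  have hfun : (fun ω' => (1 / N) * ∑ d ∈ Finset.range D, ∑ j : Fin (2 ^ d),
        (Q.rnDeriv P (X d j ω')).toReal * h (X d j ω'))
      = (1/N) • ∑ i : (d : Fin D) × Fin (2 ^ (d : ℕ)), Y i := by
    funext ω'
    simp only [Pi.smul_apply, smul_eq_mul, Finset.sum_apply]
    congr 1
    rw [← Fin.sum_univ_eq_sum_range
      (fun d => ∑ j : Fin (2 ^ d), (Q.rnDeriv P (X d j ω')).toReal * h (X d j ω')) D]
    rw [← Finset.univ_sigma_univ, Finset.sum_sigma]
  rw [hfun, variance_smul, hvarsum]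
  calc (1/N)^2 * ∑ i, variance (Y i) μ
      ≤ (1/N)^2 * (N * (a * ∫ x, (f x)^2 ∂Q)) := by
        apply mul_le_mul_of_nonneg_left hsum_bound (by positivity)
    _ = a * (∫ x, (f x)^2 ∂Q) / N := by
        field_simp
end

section
/- Let ν, ρ > 0, κ > 0 and μ ∈ ℝ with |μ - ν| < ρ√(2κ). Set Δ = (μ - ν)/ρ and σ² = -ρ² W(-exp(Δ² - 2κ - 1)), where W is the principal branch of the Lambert W function. Then 0 < σ² < ρ² and KL(N(μ, σ²) ‖ N(ν, ρ²)) = log(ρ/σ) + (σ² + (μ-ν)²)/(2ρ²) - 1/2 = κ. -/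
/-- Mean–KL parameterization of a Gaussian: with `|μ - ν| < ρ√(2κ)`, `Δ = (μ-ν)/ρ` and
`σ² = -ρ² W(-exp(Δ² - 2κ - 1))` (with `W` the principal Lambert `W` branch, characterized
by `W ≥ -1` and `W e^W = y`), we get `0 < σ² < ρ²` and the Gaussian KL divergence
`log(ρ/σ) + (σ² + (μ-ν)²)/(2ρ²) - 1/2` equals `κ`. -/
theorem isoKL_gaussian_parameterization (ν ρ κ μ : ℝ)
    (hν : 0 < ν) (hρ : 0 < ρ) (hκ : 0 < κ)
    (hμ : |μ - ν| < ρ * Real.sqrt (2 * κ))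
    (W : ℝ) (hWge : -1 ≤ W)
    (hW : W * Real.exp W = -Real.exp (((μ - ν) / ρ) ^ 2 - 2 * κ - 1))
    (σ2 : ℝ) (hσ2 : σ2 = -ρ ^ 2 * W) :
    0 < σ2 ∧ σ2 < ρ ^ 2 ∧
      Real.log (ρ / Real.sqrt σ2) + (σ2 + (μ - ν) ^ 2) / (2 * ρ ^ 2) - 1/2 = κ := by
  have hρ2 : (0:ℝ) < ρ ^ 2 := by positivity
  set Δ : ℝ := (μ - ν) / ρ with hΔdef
  have hΔ2 : Δ ^ 2 < 2 * κ := by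
    have h2κ : (0:ℝ) ≤ 2 * κ := by linarith
    have habs : |Δ| < Real.sqrt (2 * κ) := by
      rw [hΔdef, abs_div, abs_of_pos hρ, div_lt_iff₀ hρ]
      linarith [hμ]
    have := mul_self_lt_mul_self (abs_nonneg Δ) habs
    rw [Real.mul_self_sqrt h2κ] at this
    nlinarith [sq_abs Δ, this]
  have hE : Δ ^ 2 - 2 * κ - 1 < -1 := by linarith
  have hexp : (0:ℝ) < Real.exp (Δ ^ 2 - 2 * κ - 1) := Real.exp_pos _
  have hWneg : W < 0 := by
    by_contra h
    push_neg at h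
    have : 0 ≤ W * Real.exp W := mul_nonneg h (Real.exp_pos W).le
    rw [hW] at this
    linarith
  have hWne : W ≠ -1 := by
    intro h
    rw [h] at hW
    have : Real.exp (-1) = Real.exp (Δ ^ 2 - 2 * κ - 1) := by linarith [hW]
    have := Real.exp_injective this
    linarith
  have hWgt : -1 < W := lt_of_le_of_ne hWge (Ne.symm hWne)
  have hσ2' : σ2 = ρ ^ 2 * (-W) := by rw [hσ2]; ring
  have hσ2pos : 0 < σ2 := by rw [hσ2']; exact mul_pos hρ2 (by linarith)
  have hσ2lt : σ2 < ρ ^ 2 := by nlinarith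
  have hprod : (-W) * Real.exp W = Real.exp (Δ ^ 2 - 2 * κ - 1) := by linarith [hW]
  have hlogW : Real.log (-W) = Δ ^ 2 - 2 * κ - 1 - W := by
    have := congrArg Real.log hprod
    rw [Real.log_mul (by linarith) (Real.exp_ne_zero W), Real.log_exp, Real.log_exp] at this
    linarith
  have hlogσ2 : Real.log σ2 = 2 * Real.log ρ + Real.log (-W) := by
    rw [hσ2', Real.log_mul (ne_of_gt hρ2) (by linarith), Real.log_pow]
    push_cast; ring
  have hlogdiv : Real.log (ρ / Real.sqrt σ2) = Real.log ρ - (1/2) * Real.log σ2 := by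
    rw [Real.log_div (ne_of_gt hρ) (ne_of_gt (Real.sqrt_pos.mpr hσ2pos)),
      Real.log_sqrt hσ2pos.le]
    ring
  have hμν : (μ - ν) ^ 2 = Δ ^ 2 * ρ ^ 2 := by
    rw [hΔdef]; field_simp
  refine ⟨hσ2pos, hσ2lt, ?_⟩
  rw [hlogdiv, hlogσ2, hlogW, hμν, hσ2']
  field_simp
  ring
end
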